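/- A vertex v is landmark-distance affected (its r-label in the minimal highway cover labelling changes, or its distance to r changes) by a batch update if and only if its landmark distance changes: d^L_G(r,v) ≠ d^L_{G'}(r,v). -/

import Mathlib

open scoped Classical

variable {V : Type*}

namespace BatchHL

/-- `l` is a walk in `G` from `r` to `v`, given as its (nonempty) list of visited vertices. -/
def IsWalk (G : SimpleGraph V) (r v : V) (l : List V) : Prop :=
  l ≠ [] ∧ l.head? = some r ∧ l.getLast? = some v ∧ l.Chain' G.Adj

/-- The length (number of edges) of a walk given as a list of vertices. -/
def len (l : List V) : ℕ := l.length - 1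

/-- The walk `l` passes through the (undirected) edge `(a, b)`. -/
def Passes (l : List V) (a b : V) : Prop :=
  (a, b) ∈ l.zip l.tail ∨ (b, a) ∈ l.zip l.tail

/-- `P_G(r,v)`: the set of all shortest paths between `r` and `v` in `G`. -/
def SPaths (G : SimpleGraph V) (r v : V) : Set (List V) :=
  {l | IsWalk G r v l ∧ ∀ l', IsWalk G r v l' → l.length ≤ l'.length}

/-- `(a,b)` is an edge deleted by the batch update turning `G` into `G'`. -/
def DeletedEdge (G G' : SimpleGraph V) (a b : V) : Prop := G.Adj a b ∧ ¬ G'.Adj a b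

/-- `(a,b)` is an edge inserted by the batch update turning `G` into `G'`. -/
def InsertedEdge (G G' : SimpleGraph V) (a b : V) : Prop := G'.Adj a b ∧ ¬ G.Adj a b

/-- `(a,b)` is an edge of the batch update `B` turning `G` into `G'`. -/
def UpdatedEdge (G G' : SimpleGraph V) (a b : V) : Prop :=
  InsertedEdge G G' a b ∨ DeletedEdge G G' a b

/-- The walk `l` passes through a deleted edge. -/
def PassesDeleted (G G' : SimpleGraph V) (l : List V) : Prop :=
  ∃ a b, DeletedEdge G G' a b ∧ Passes l a b

/-- The walk `l` passes through an inserted edge. -/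
def PassesInserted (G G' : SimpleGraph V) (l : List V) : Prop :=
  ∃ a b, InsertedEdge G G' a b ∧ Passes l a b

/-- `v` is affected w.r.t. landmark `r` iff the set of shortest paths changes. -/
def Affected (G G' : SimpleGraph V) (r v : V) : Prop := SPaths G r v ≠ SPaths G' r v

/-- A composite path from `r` to `v`: a prefix lying in `G` followed by a suffix lying in `G'`. -/
def IsComposite (G G' : SimpleGraph V) (r v : V) (l : List V) : Prop :=
  ∃ w l₁ l₂, IsWalk G r w l₁ ∧ IsWalk G' w v l₂ ∧ l = l₁ ++ l₂.tail

/-- A significant composite path: a composite path whose `G`-prefix passes through a deleted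
edge and whose `G'`-suffix passes through an inserted edge. -/
def IsSigComposite (G G' : SimpleGraph V) (r v : V) (l : List V) : Prop :=
  ∃ w l₁ l₂, IsWalk G r w l₁ ∧ IsWalk G' w v l₂ ∧ l = l₁ ++ l₂.tail ∧
    PassesDeleted G G' l₁ ∧ PassesInserted G G' l₂

/-- `v` is composite-path affected w.r.t. `r`. -/
def CPAffected (G G' : SimpleGraph V) (r v : V) : Prop :=
  Affected G G' r v ∨ ∃ l, IsSigComposite G G' r v l ∧ (len l : ℕ∞) ≤ G.edist r v

/-- A distance labelling: each label entry `(r, δ) ∈ L v` satisfies `δ = d_G(r,v)`. -/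
def IsLabelling (G : SimpleGraph V) (L : V → Set (V × ℕ∞)) : Prop :=
  ∀ v r δ, (r, δ) ∈ L v → δ = G.edist r v

/-- A 2-hop cover labelling: a distance labelling such that every pair `s, t` has a common
hub `r` lying on a shortest path between `s` and `t`. -/
def Is2HopCover (G : SimpleGraph V) (L : V → Set (V × ℕ∞)) : Prop :=
  IsLabelling G L ∧ ∀ s t : V, ∃ r, (r, G.edist r s) ∈ L s ∧ (r, G.edist r t) ∈ L t ∧
    G.edist s r + G.edist r t = G.edist s t

/-- A highway cover labelling `Γ = (H, L)` over `G` with landmarks `R`.  The highway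
distances `δ_H(r,r_i)` are by definition the graph distances `d_G(r,r_i)`. -/
def IsHighwayCover (G : SimpleGraph V) (R : Set V) (L : V → Set (V × ℕ∞)) : Prop :=
  (∀ v r δ, (r, δ) ∈ L v → r ∈ R ∧ δ = G.edist r v) ∧
  ∀ v, v ∉ R → ∀ r ∈ R,
    G.edist r v = sInf {x | ∃ ri δ, (ri, δ) ∈ L v ∧ x = δ + G.edist r ri}

/-- The landmark length / landmark distance values: `⊤` for "no path", otherwise a pair of a
length and a landmark flag (a `Prop`). -/
abbrev LLen := WithTop (ℕ × Prop)

/-- Lexicographic order on landmark lengths, with flag ordering `True < False`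
(i.e. `x ≤ y` at equal length iff `y`'s flag implies `x`'s flag). -/
def llLe : LLen → LLen → Prop
  | _, none => True
  | none, some _ => False
  | some a, some b => a.1 < b.1 ∨ (a.1 = b.1 ∧ (b.2 → a.2))

/-- Strict lexicographic order on landmark lengths. -/
def llLt (x y : LLen) : Prop := llLe x y ∧ ¬ llLe y x

/-- The extension operator `⊕`: `(d,l) ⊕ w = (d+1, True)` if `w ∈ R∖{r}`, else `(d+1, l)`. -/
def oplus (R : Set V) (r : V) : LLen → V → LLen
  | none, _ => none
  | some a, w => some (a.1 + 1, (w ∈ R ∧ w ≠ r) ∨ a.2)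

/-- The landmark length `lml(l)` of a walk `l` starting at `r`: its length together with the
flag recording whether it passes through a landmark other than `r`. -/
def lmLen (R : Set V) (r : V) (l : List V) : LLen :=
  some (len l, ∃ w ∈ l, w ∈ R ∧ w ≠ r)

/-- The landmark distance `d^L_G(r,v)`: the lexicographically minimal landmark length of a
walk from `r` to `v` (with `True < False` on flags), `⊤` if there is none.  Explicitly, its
length component is the minimal walk length and its flag holds iff some walk of minimal
length passes through a landmark other than `r`. -/
noncomputable def lmDist (G : SimpleGraph V) (R : Set V) (r v : V) : LLen :=
  if ∃ l, IsWalk G r v l then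
    some (sInf {n | ∃ l, IsWalk G r v l ∧ len l = n},
      ∃ l, IsWalk G r v l ∧ len l = sInf {n | ∃ l', IsWalk G r v l' ∧ len l' = n} ∧
        ∃ w ∈ l, w ∈ R ∧ w ≠ r)
  else ⊤

/-- Order on extended landmark lengths `(landmark length, deletion flag)`, lexicographic with
`True < False` on the deletion flag. -/
def ellLe (x y : LLen × Prop) : Prop := llLt x.1 y.1 ∨ (x.1 = y.1 ∧ (y.2 → x.2))

/-- Strict order on extended landmark lengths. -/
def ellLt (x y : LLen × Prop) : Prop := ellLe x y ∧ ¬ ellLe y x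

/-- `β(r,v) = (d^L_G(r,v), True)`. -/
noncomputable def beta (G : SimpleGraph V) (R : Set V) (r v : V) : LLen × Prop :=
  (lmDist G R r v, True)

/-- The distance bound `d_bou(u, S)` of `u` w.r.t. `S` in `G'`. -/
noncomputable def dbou (G' : SimpleGraph V) (r : V) (S : Set V) (u : V) : ℕ∞ :=
  ⨅ (w : V) (_ : G'.Adj u w ∧ w ∉ S), (G'.edist r w + 1)

/-- The set `{ d^L_{G'}(r,w) ⊕ v | w ∈ N_{G'}(v) ∖ S }`, whose lexicographic minimum is the
landmark distance bound `d^L_bou(v,S)`. -/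
noncomputable def lmBouSet (G' : SimpleGraph V) (R : Set V) (r v : V) (S : Set V) :
    Set LLen :=
  {x | ∃ w, G'.Adj v w ∧ w ∉ S ∧ x = oplus R r (lmDist G' R r w) v}

/-- The subgraph `G[V ∖ R]` obtained by removing all landmarks (landmarks become isolated). -/
def removeLandmarks (G : SimpleGraph V) (R : Set V) : SimpleGraph V where
  Adj u w := G.Adj u w ∧ u ∉ R ∧ w ∉ R
  symm := ⟨fun u w (⟨h, hu, hw⟩ : G.Adj u w ∧ u ∉ R ∧ w ∉ R) => ⟨h.symm, hw, hu⟩⟩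
  loopless := ⟨fun u (⟨h, _, _⟩ : G.Adj u u ∧ u ∉ R ∧ u ∉ R) => G.loopless.irrefl u h⟩


section Aux

open SimpleGraph

variable (G : SimpleGraph V) (R : Set V) (r v : V)

lemma isWalk_support {r v : V} (p : G.Walk r v) : IsWalk G r v p.support := by
  refine ⟨p.support_ne_nil, ?_, ?_, p.isChain_adj_support⟩
  · rw [p.support_eq_cons]; rfl
  · rw [List.getLast?_eq_getLast_of_ne_nil p.support_ne_nil, p.getLast_support]

lemma len_support {r v : V} (p : G.Walk r v) : len p.support = p.length := by
  simp [len, SimpleGraph.Walk.length_support]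

lemma exists_walk_of_chain :
    ∀ (l : List V) (r v : V), l.head? = some r → l.getLast? = some v → l.Chain' G.Adj →
      ∃ p : G.Walk r v, p.support = l := by
  intro l
  induction l with
  | nil => intro r v h; simp at h
  | cons a t ih =>
    intro r v hh hl hc
    rw [List.head?_cons, Option.some_inj] at hh
    subst hh
    cases t with
    | nil =>
      simp only [List.getLast?_singleton, Option.some_inj] at hl
      subst hl
      exact ⟨SimpleGraph.Walk.nil, rfl⟩
    | cons b t' =>
      rw [List.getLast?_cons_cons] at hl
      rw [show List.Chain' G.Adj (a :: b :: t') ↔ _ from List.isChain_cons_cons] at hc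
      obtain ⟨p, hp⟩ := ih b v rfl hl hc.2
      exact ⟨SimpleGraph.Walk.cons hc.1 p, by simp [hp]⟩

lemma isWalk_iff (l : List V) :
    IsWalk G r v l ↔ ∃ p : G.Walk r v, p.support = l :=
  ⟨fun h => exists_walk_of_chain G l r v h.2.1 h.2.2.1 h.2.2.2,
   fun ⟨p, hp⟩ => hp ▸ isWalk_support G p⟩

lemma walk_lens :
    {n | ∃ l, IsWalk G r v l ∧ len l = n} =
      Set.range (SimpleGraph.Walk.length : G.Walk r v → ℕ) := by
  ext n
  constructor
  · rintro ⟨l, hl, rfl⟩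
    obtain ⟨p, rfl⟩ := (isWalk_iff G r v l).mp hl
    exact ⟨p, (len_support G p).symm⟩
  · rintro ⟨p, rfl⟩
    exact ⟨p.support, isWalk_support G p, len_support G p⟩

lemma sInf_walk_lens :
    sInf {n | ∃ l, IsWalk G r v l ∧ len l = n} = G.dist r v := by
  rw [walk_lens, ← SimpleGraph.dist_eq_sInf]

/-- The landmark flag: some walk of minimal length passes through a landmark other than `r`. -/
def Flag : Prop :=
  ∃ p : G.Walk r v, p.length = G.dist r v ∧ ∃ w ∈ p.support, w ∈ R ∧ w ≠ r

lemma flag_iff :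
    (∃ l, IsWalk G r v l ∧ len l = sInf {n | ∃ l', IsWalk G r v l' ∧ len l' = n} ∧
      ∃ w ∈ l, w ∈ R ∧ w ≠ r) ↔ Flag G R r v := by
  rw [sInf_walk_lens]
  constructor
  · rintro ⟨l, hl, hlen, hw⟩
    obtain ⟨p, rfl⟩ := (isWalk_iff G r v l).mp hl
    exact ⟨p, by rwa [len_support] at hlen, hw⟩
  · rintro ⟨p, hlen, hw⟩
    exact ⟨p.support, isWalk_support G p, by rwa [len_support], hw⟩

lemma lmDist_eq :
    lmDist G R r v =
      if G.Reachable r v then some (G.dist r v, Flag G R r v) else (⊤ : LLen) := by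
  have hiff : (∃ l, IsWalk G r v l) ↔ G.Reachable r v := by
    constructor
    · rintro ⟨l, hl⟩
      obtain ⟨p, -⟩ := (isWalk_iff G r v l).mp hl
      exact ⟨p⟩
    · rintro ⟨p⟩
      exact ⟨p.support, isWalk_support G p⟩
  unfold lmDist
  by_cases h : G.Reachable r v
  · refine (if_pos (hiff.mpr h)).trans (Eq.trans ?_ (if_pos h).symm)
    exact congrArg some (Prod.ext (sInf_walk_lens G r v) (propext (flag_iff G R r v)))
  · exact (if_neg (fun hx => h (hiff.mp hx))).trans (if_neg h).symm

lemma split_lemma {G : SimpleGraph V} {s v w : V} (p : G.Walk s v)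
    (hp : (p.length : ℕ∞) = G.edist s v) (hw : w ∈ p.support) (hne : w ≠ s) :
    G.edist s w + G.edist w v = G.edist s v ∧ G.edist w v < G.edist s v := by
  have hsum : (p.takeUntil w hw).length + (p.dropUntil w hw).length = p.length := by
    rw [← SimpleGraph.Walk.length_append, p.take_spec hw]
  have h1 : G.edist s w ≤ (p.takeUntil w hw).length := edist_le _
  have h2 : G.edist w v ≤ (p.dropUntil w hw).length := edist_le _
  have h4 : G.edist s w + G.edist w v ≤ G.edist s v := by
    calc G.edist s w + G.edist w v
        ≤ ((p.takeUntil w hw).length : ℕ∞) + ((p.dropUntil w hw).length : ℕ∞) :=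
          add_le_add h1 h2
      _ = ((p.length : ℕ) : ℕ∞) := by rw [← Nat.cast_add, hsum]
      _ = G.edist s v := hp
  have heq : G.edist s w + G.edist w v = G.edist s v :=
    le_antisymm h4 SimpleGraph.edist_triangle
  refine ⟨heq, ?_⟩
  have htop : G.edist s v ≠ ⊤ := by rw [← hp]; exact ENat.coe_ne_top _
  have hle : G.edist w v ≤ G.edist s v := le_add_self.trans heq.le
  refine lt_of_le_of_ne hle (fun hcon => ?_)
  have h' : G.edist s w + G.edist s v = 0 + G.edist s v := by
    rw [zero_add, ← hcon]; exact heq.trans hcon.symm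
  have h0 : G.edist s w = 0 := WithTop.add_right_cancel htop h'
  exact hne (SimpleGraph.edist_eq_zero_iff.mp h0).symm

lemma exists_good {r v : V} (hr : r ∈ R) (hreach : G.Reachable r v) :
    ∃ s ∈ R, G.edist r s + G.edist s v = G.edist r v ∧ ¬ Flag G R s v := by
  set S : Set ℕ :=
    {d | ∃ s, s ∈ R ∧ G.edist r s + G.edist s v = G.edist r v ∧ G.dist s v = d} with hS
  have hSne : S.Nonempty := ⟨G.dist r v, r, hr, by simp, rfl⟩
  obtain ⟨s, hsR, hsum, hd⟩ := Nat.sInf_mem hSne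
  refine ⟨s, hsR, hsum, fun hflag => ?_⟩
  obtain ⟨p, hplen, w, hwsup, hwR, hwne⟩ := hflag
  have htopv : G.edist r v ≠ ⊤ := SimpleGraph.edist_ne_top_iff_reachable.mpr hreach
  have hsvtop : G.edist s v ≠ ⊤ := fun h => htopv (by rw [← hsum, h, add_top])
  have hplen' : (p.length : ℕ∞) = G.edist s v := by
    rw [hplen]; exact ENat.coe_toNat hsvtop
  obtain ⟨heqs, hlt⟩ := split_lemma p hplen' hwsup hwne
  have hsum' : G.edist r w + G.edist w v = G.edist r v := by
    refine le_antisymm ?_ SimpleGraph.edist_triangle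
    calc G.edist r w + G.edist w v
        ≤ (G.edist r s + G.edist s w) + G.edist w v :=
          add_le_add_left SimpleGraph.edist_triangle _
      _ = G.edist r s + (G.edist s w + G.edist w v) := add_assoc _ _ _
      _ = G.edist r s + G.edist s v := by rw [heqs]
      _ = G.edist r v := hsum
  have hwvtop : G.edist w v ≠ ⊤ := ne_top_of_lt hlt
  have hltn : G.dist w v < G.dist s v := by
    have e1 : ((G.dist w v : ℕ) : ℕ∞) = G.edist w v := ENat.coe_toNat hwvtop
    have e2 : ((G.dist s v : ℕ) : ℕ∞) = G.edist s v := ENat.coe_toNat hsvtop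
    rw [← e1, ← e2] at hlt
    exact_mod_cast hlt
  have hmem : G.dist w v ∈ S := ⟨w, hwR, hsum', rfl⟩
  have := Nat.sInf_le hmem
  omega

/-- The canonical minimal highway cover labelling. -/
noncomputable def L0 : V → Set (V × ℕ∞) := fun v =>
  {p | p.1 ∈ R ∧ p.2 = G.edist p.1 v ∧ G.Reachable p.1 v ∧ ¬ Flag G R p.1 v}

lemma L0_cover : IsHighwayCover G R (L0 G R) := by
  constructor
  · intro v r δ h
    exact ⟨h.1, h.2.1⟩
  · intro v hv r hrR
    refine le_antisymm (le_sInf ?_) ?_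
    · rintro x ⟨ri, δ, hmem, rfl⟩
      obtain ⟨hiR, hδ, hre, hnf⟩ := hmem
      dsimp only at hiR hδ hre hnf
      subst hδ
      calc G.edist r v ≤ G.edist r ri + G.edist ri v := SimpleGraph.edist_triangle
        _ = G.edist ri v + G.edist r ri := add_comm _ _
    · by_cases hreach : G.Reachable r v
      · obtain ⟨s, hsR, hsum, hnf⟩ := exists_good G R hrR hreach
        have htopv : G.edist r v ≠ ⊤ := SimpleGraph.edist_ne_top_iff_reachable.mpr hreach
        have hsv : G.Reachable s v := by
          refine SimpleGraph.reachable_of_edist_ne_top (fun h => htopv ?_)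
          rw [← hsum, h, add_top]
        have hmem : G.edist s v + G.edist r s ∈
            {x | ∃ ri δ, (ri, δ) ∈ L0 G R v ∧ x = δ + G.edist r ri} :=
          ⟨s, G.edist s v, ⟨hsR, rfl, hsv, hnf⟩, rfl⟩
        calc sInf {x | ∃ ri δ, (ri, δ) ∈ L0 G R v ∧ x = δ + G.edist r ri}
            ≤ G.edist s v + G.edist r s := sInf_le hmem
          _ = G.edist r s + G.edist s v := add_comm _ _
          _ = G.edist r v := hsum
      · rw [SimpleGraph.edist_eq_top_of_not_reachable hreach]
        exact le_top

lemma label_mem {r v : V} (hr : r ∈ R) (hv : v ∉ R)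
    {L : V → Set (V × ℕ∞)} (hL : IsHighwayCover G R L)
    (hmin : ∀ L₂, IsHighwayCover G R L₂ → ∀ u, L u ⊆ L₂ u) (δ : ℕ∞) :
    (r, δ) ∈ L v ↔ δ = G.edist r v ∧ G.Reachable r v ∧ ¬ Flag G R r v := by
  constructor
  · intro h
    have h0 := hmin (L0 G R) (L0_cover G R) v h
    exact ⟨h0.2.1, h0.2.2⟩
  · rintro ⟨rfl, hre, hnf⟩
    have hcond := hL.2 v hv r hr
    have htop : G.edist r v ≠ ⊤ := SimpleGraph.edist_ne_top_iff_reachable.mpr hre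
    have hlt : sInf {x | ∃ ri δ, (ri, δ) ∈ L v ∧ x = δ + G.edist r ri} < G.edist r v + 1 := by
      rw [← hcond]
      exact (ENat.lt_add_one_iff htop).mpr le_rfl
    obtain ⟨x, ⟨ri, δ', hmem, rfl⟩, hxlt⟩ := sInf_lt_iff.mp hlt
    have hx : δ' + G.edist r ri ≤ G.edist r v := (ENat.lt_add_one_iff htop).mp hxlt
    obtain ⟨hiR, hδ'⟩ := hL.1 v ri δ' hmem
    subst hδ'
    have heq : G.edist ri v + G.edist r ri = G.edist r v := by
      refine le_antisymm hx ?_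
      rw [add_comm]
      exact SimpleGraph.edist_triangle
    have hri_r : ri = r := by
      by_contra hne
      have h1 : G.edist r ri ≠ ⊤ := fun h => htop (by rw [← heq, h, add_top])
      have h2 : G.edist ri v ≠ ⊤ := fun h => htop (by rw [← heq, h, top_add])
      obtain ⟨p, hp⟩ := SimpleGraph.exists_walk_of_edist_ne_top h1
      obtain ⟨q, hq⟩ := SimpleGraph.exists_walk_of_edist_ne_top h2
      apply hnf
      refine ⟨p.append q, ?_, ri, ?_, hiR, hne⟩
      · have hlen : ((p.append q).length : ℕ∞) = G.edist r v := by
          rw [SimpleGraph.Walk.length_append, Nat.cast_add, hp, hq, add_comm, heq]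
        show (p.append q).length = (G.edist r v).toNat
        rw [← hlen, ENat.toNat_coe]
      · rw [SimpleGraph.Walk.mem_support_append_iff]
        exact Or.inl p.end_mem_support
    subst hri_r
    exact hmem

lemma label_set {r v : V} (hr : r ∈ R) (hv : v ∉ R)
    {L : V → Set (V × ℕ∞)} (hL : IsHighwayCover G R L)
    (hmin : ∀ L₂, IsHighwayCover G R L₂ → ∀ u, L u ⊆ L₂ u) :
    {δ : ℕ∞ | (r, δ) ∈ L v} =
      if G.Reachable r v ∧ ¬ Flag G R r v then {G.edist r v} else (∅ : Set ℕ∞) := by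
  ext δ
  rw [Set.mem_setOf_eq, label_mem G R hr hv hL hmin δ]
  by_cases h : G.Reachable r v ∧ ¬ Flag G R r v
  · rw [if_pos h, Set.mem_singleton_iff]
    exact ⟨fun hh => hh.1, fun hh => ⟨hh, h.1, h.2⟩⟩
  · rw [if_neg h]
    simp only [Set.mem_empty_iff_false, iff_false]
    rintro ⟨-, hre, hnf⟩
    exact h ⟨hre, hnf⟩

end Aux

/-- **Lemma 5.** `v` is LD-affected (its `r`-label in the minimal highway cover
labelling changes, or its distance to `r` changes) iff its landmark distance changes:
`d^L_G(r,v) ≠ d^L_{G'}(r,v)`. -/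
theorem ld_affected_iff (G G' : SimpleGraph V) (R : Set V) (r v : V)
    (hr : r ∈ R) (hv : v ∉ R)
    (L L' : V → Set (V × ℕ∞))
    (hL : IsHighwayCover G R L)
    (hminL : ∀ L₂, IsHighwayCover G R L₂ → ∀ u, L u ⊆ L₂ u)
    (hL' : IsHighwayCover G' R L')
    (hminL' : ∀ L₂, IsHighwayCover G' R L₂ → ∀ u, L' u ⊆ L₂ u) :
    ({δ : ℕ∞ | (r, δ) ∈ L v} ≠ {δ : ℕ∞ | (r, δ) ∈ L' v} ∨ G.edist r v ≠ G'.edist r v)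
      ↔ lmDist G R r v ≠ lmDist G' R r v := by
  rw [← not_iff_not]
  push_neg
  rw [label_set G R hr hv hL hminL, label_set G' R hr hv hL' hminL',
    lmDist_eq G R r v, lmDist_eq G' R r v]
  constructor
  · rintro ⟨hset, hed⟩
    have hre : G.Reachable r v ↔ G'.Reachable r v := by
      rw [← SimpleGraph.edist_ne_top_iff_reachable, ← SimpleGraph.edist_ne_top_iff_reachable,
        hed]
    by_cases h : G.Reachable r v
    · have h' := hre.mp h
      refine (if_pos h).trans (Eq.trans ?_ (if_pos h').symm)
      have hd : G.dist r v = G'.dist r v := congrArg ENat.toNat hed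
      have hflag : Flag G R r v ↔ Flag G' R r v := by
        constructor
        · intro f1
          by_contra f2
          rw [if_neg (fun hc => hc.2 f1), if_pos ⟨h', f2⟩] at hset
          exact Set.singleton_ne_empty _ hset.symm
        · intro f2
          by_contra f1
          rw [if_pos ⟨h, f1⟩, if_neg (fun hc => hc.2 f2)] at hset
          exact Set.singleton_ne_empty _ hset
      exact congrArg some (Prod.ext hd (propext hflag))
    · exact (if_neg h).trans (if_neg (fun hc => h (hre.mpr hc))).symm
  · intro hlm
    by_cases h : G.Reachable r v <;> by_cases h' : G'.Reachable r v
    · replace hlm := (if_pos h).symm.trans (hlm.trans (if_pos h'))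
      have hpair := Option.some.inj hlm
      have hd : G.dist r v = G'.dist r v := congrArg Prod.fst hpair
      have hf : Flag G R r v ↔ Flag G' R r v := iff_of_eq (congrArg Prod.snd hpair)
      have hed : G.edist r v = G'.edist r v := by
        have e1 := ENat.coe_toNat (SimpleGraph.edist_ne_top_iff_reachable.mpr h)
        have e2 := ENat.coe_toNat (SimpleGraph.edist_ne_top_iff_reachable.mpr h')
        rw [← e1, ← e2]
        exact congrArg Nat.cast hd
      refine ⟨?_, hed⟩
      by_cases f1 : Flag G R r v
      · rw [if_neg (fun hc => hc.2 f1), if_neg (fun hc => hc.2 (hf.mp f1))]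
      · rw [if_pos ⟨h, f1⟩, if_pos ⟨h', fun f2 => f1 (hf.mpr f2)⟩, hed]
    · replace hlm := (if_pos h).symm.trans (hlm.trans (if_neg h'))
      exact absurd hlm (Option.some_ne_none _)
    · replace hlm := (if_neg h).symm.trans (hlm.trans (if_pos h'))
      exact absurd hlm.symm (Option.some_ne_none _)
    · refine ⟨?_, ?_⟩
      · rw [if_neg (fun hc => h hc.1), if_neg (fun hc => h' hc.1)]
      · rw [SimpleGraph.edist_eq_top_of_not_reachable h,
          SimpleGraph.edist_eq_top_of_not_reachable h']

end BatchHL
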